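/- Equation (Q1) with δ=1: α(x−v)(u−y) − β(x−u)(v−y) + αβ(α−β) = 0 admits the multiplicative three-leg form ((x−u+α)/(x−u−α)) · ((x−v−β)/(x−v+β)) = (x−y+α−β)/(x−y−α+β), whenever the denominators are nonzero. -/
import Mathlib

/-- Equation (Q1) with `δ = 1`: `α(x−v)(u−y) − β(x−u)(v−y) + αβ(α−β) = 0`
admits the multiplicative three-leg form
`((x−u+α)/(x−u−α)) · ((x−v−β)/(x−v+β)) = (x−y+α−β)/(x−y−α+β)`. -/
theorem Q1_delta_one_three_leg_form
    (x u v y α β : ℂ)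
    (hu1 : x - u - α ≠ 0) (hu2 : x - u + α ≠ 0)
    (hv1 : x - v + β ≠ 0) (hv2 : x - v - β ≠ 0)
    (hy1 : x - y - α + β ≠ 0) (hy2 : x - y + α - β ≠ 0) :
    α * (x - v) * (u - y) - β * (x - u) * (v - y) + α * β * (α - β) = 0 ↔
      ((x - u + α) / (x - u - α)) * ((x - v - β) / (x - v + β)) =
        (x - y + α - β) / (x - y - α + β) := by
  rw [div_mul_div_comm, div_eq_div_iff (mul_ne_zero hu1 hv1) hy1]
  constructor
  · intro h; linear_combination 2 * h
  · intro h; linear_combination h / 2
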